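/- arXiv:1104.4459 — 6 statements merged into one kernel-verified Lean document; each statement's English description precedes it below -/
import Mathlib

section
/- For all r in (0,1], the product of the modified Bessel functions satisfies I₀(r)·K₀(r) ≤ 1 - log r. -/
open Real MeasureTheory Filter Set

noncomputable def besselI0 (r : ℝ) : ℝ :=
  ∑' k : ℕ, (r ^ 2 / 4) ^ k / (Nat.factorial k : ℝ) ^ 2

noncomputable def besselK0Series (r : ℝ) : ℝ :=
  ∑' k : ℕ, (harmonic (k + 1) : ℝ) * (r ^ 2 / 4) ^ (k + 1) / (Nat.factorial (k + 1) : ℝ) ^ 2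

noncomputable def besselK0 (r : ℝ) : ℝ :=
  -(Real.log (r / 2) + Real.eulerMascheroniConstant) * besselI0 r + besselK0Series r

lemma exp_tsum' (x : ℝ) : Real.exp x = ∑' n : ℕ, x ^ n / (Nat.factorial n : ℝ) := by
  rw [Real.exp_eq_exp_ℝ, NormedSpace.exp_eq_tsum_div]

lemma fact_one_le (k : ℕ) : (1:ℝ) ≤ (Nat.factorial k : ℝ) := by
  exact_mod_cast Nat.one_le_iff_ne_zero.mpr k.factorial_ne_zero

lemma summable_I0 {x : ℝ} (hx : 0 ≤ x) :
    Summable (fun k : ℕ => x ^ k / (Nat.factorial k : ℝ) ^ 2) := by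
  refine Summable.of_nonneg_of_le (fun k => by positivity) (fun k => ?_)
    (Real.summable_pow_div_factorial x)
  have h1 := fact_one_le k
  gcongr <;> nlinarith [pow_nonneg hx k]

lemma harmonic_le_card (n : ℕ) : (harmonic n : ℝ) ≤ n := by
  have : (harmonic n : ℚ) ≤ n := by
    induction n with
    | zero => simp
    | succ n ih =>
      rw [harmonic_succ]
      have h1 : ((n:ℚ)+1)⁻¹ ≤ 1 := by
        rw [inv_le_one_iff₀]; right; linarith [Nat.cast_nonneg (α := ℚ) n]
      push_cast
      push_cast at ih
      linarith
  exact_mod_cast this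

lemma harmonic_cast_nonneg (n : ℕ) : (0:ℝ) ≤ (harmonic n : ℝ) := by
  rcases Nat.eq_zero_or_pos n with h | h
  · simp [h]
  · exact_mod_cast (harmonic_pos (Nat.pos_iff_ne_zero.mp h)).le

lemma I0_le_exp {r : ℝ} : besselI0 r ≤ Real.exp (r ^ 2 / 4) := by
  have hx : (0:ℝ) ≤ r ^ 2 / 4 := by positivity
  rw [besselI0, exp_tsum']
  refine Summable.tsum_le_tsum (fun k => ?_) (summable_I0 hx) (Real.summable_pow_div_factorial _)
  have h1 := fact_one_le k
  gcongr <;> nlinarith [pow_nonneg hx k]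

lemma one_le_I0 {r : ℝ} : 1 ≤ besselI0 r := by
  have hx : (0:ℝ) ≤ r ^ 2 / 4 := by positivity
  have := Summable.le_tsum (summable_I0 hx) 0 (fun i _ => by positivity)
  simpa [besselI0] using this

lemma K0Series_nonneg {r : ℝ} : 0 ≤ besselK0Series r := by
  refine tsum_nonneg fun k => ?_
  have h := harmonic_cast_nonneg (k+1)
  positivity

set_option maxHeartbeats 1000000 in
lemma K0Series_le {r : ℝ} :
    besselK0Series r ≤ (r ^ 2 / 4) * Real.exp (r ^ 2 / 4) := by
  unfold besselK0Series
  set x : ℝ := r ^ 2 / 4 with hxdef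
  have hx : (0:ℝ) ≤ x := by positivity
  have hsum2 : Summable (fun k : ℕ => x * (x ^ k / (Nat.factorial k : ℝ))) :=
    (Real.summable_pow_div_factorial x).mul_left x
  have hterm : ∀ k : ℕ,
      (harmonic (k + 1) : ℝ) * x ^ (k + 1) / (Nat.factorial (k + 1) : ℝ) ^ 2
        ≤ x * (x ^ k / (Nat.factorial k : ℝ)) := by
    intro k
    have hH : (harmonic (k+1) : ℝ) ≤ ((k:ℝ)+1) := by
      have := harmonic_le_card (k+1); push_cast at this; linarith
    have hfact : (Nat.factorial (k+1) : ℝ) = ((k:ℝ)+1) * (Nat.factorial k : ℝ) := by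
      rw [Nat.factorial_succ]; push_cast; ring
    have hfpos : (0:ℝ) < (Nat.factorial k : ℝ) := by exact_mod_cast k.factorial_pos
    have hk1 : (0:ℝ) < (k:ℝ) + 1 := by positivity
    have h1 := fact_one_le k
    rw [hfact]
    have hxk : (0:ℝ) ≤ x ^ (k+1) := pow_nonneg hx _
    calc (harmonic (k + 1) : ℝ) * x ^ (k + 1) / (((k:ℝ)+1) * (Nat.factorial k : ℝ)) ^ 2
        ≤ (((k:ℝ)+1) * x ^ (k+1)) / (((k:ℝ)+1) * (Nat.factorial k : ℝ)) ^ 2 := by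
          gcongr ?_ / _
          exact mul_le_mul_of_nonneg_right hH hxk
      _ = x ^ (k+1) / (((k:ℝ)+1) * (Nat.factorial k : ℝ) ^ 2) := by field_simp
      _ ≤ x ^ (k+1) / (Nat.factorial k : ℝ) := by
          gcongr
          nlinarith
      _ = x * (x ^ k / (Nat.factorial k : ℝ)) := by rw [pow_succ]; ring
  have hsum1 : Summable (fun k : ℕ =>
      (harmonic (k + 1) : ℝ) * x ^ (k + 1) / (Nat.factorial (k + 1) : ℝ) ^ 2) := by
    refine Summable.of_nonneg_of_le (fun k => ?_) hterm hsum2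
    have h := harmonic_cast_nonneg (k+1)
    positivity
  refine le_trans (Summable.tsum_le_tsum hterm hsum1 hsum2) ?_
  rw [tsum_mul_left, exp_tsum']

lemma final_arith (I S lr e14 e12 : ℝ) (hr2 : (0:ℝ) ≤ 1)
    (hI1 : 1 ≤ I) (hIle : I ≤ e14) (hF : e14 * e14 = e12) (hFlt : e12 < 1.6488)
    (hS0 : 0 ≤ S) (hIS : I * S ≤ e12 / 4)
    (hL0 : 0 ≤ -lr) (hT3 : (-lr) * (I * I - 1) ≤ 0.152)
    (hA : (Real.log 2 - Real.eulerMascheroniConstant) * (I * I) ≤ 0.1932 * 1.6488) :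
    I * (-(lr - Real.log 2 + Real.eulerMascheroniConstant) * I + S) ≤ 1 - lr := by
  nlinarith [hA, hIS, hT3, hL0, hFlt, hI1, hIS, mul_le_mul hIle hIle (by linarith) (by linarith)]

set_option maxHeartbeats 1000000 in
theorem stmt_0 : ∀ r ∈ Set.Ioc (0:ℝ) 1, besselI0 r * besselK0 r ≤ 1 - Real.log r := by
  rintro r ⟨hr0, hr1⟩
  have hr2 : r ^ 2 ≤ 1 := by nlinarith
  have hx14 : r ^ 2 / 4 ≤ 1 / 4 := by linarith
  have hE : Real.exp (r ^ 2 / 4) ≤ Real.exp (1/4) := Real.exp_le_exp.mpr hx14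
  have hE1 : (1:ℝ) ≤ Real.exp (1/4) := Real.one_le_exp (by norm_num)
  have hF : Real.exp (1/4) * Real.exp (1/4) = Real.exp (1/2) := by
    rw [← Real.exp_add]; norm_num
  have hFlt : Real.exp (1/2) < 1.6488 := by
    have h1 : Real.exp 1 < 2.7182818286 := Real.exp_one_lt_d9
    have h2 : Real.exp (1/2) * Real.exp (1/2) = Real.exp 1 := by
      rw [← Real.exp_add]; norm_num
    nlinarith [Real.exp_pos (1/2:ℝ)]
  have he1 : (2.7182818283:ℝ) < Real.exp 1 := Real.exp_one_gt_d9
  have hL0 : 0 ≤ -Real.log r := by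
    have := Real.log_nonpos hr0.le hr1
    linarith
  have hLr2 : (-Real.log r) * r ^ 2 ≤ 1 / (2 * Real.exp 1) := by
    have hpos : (0:ℝ) < (r ^ 2 * Real.exp 1)⁻¹ := by positivity
    have h := Real.log_le_sub_one_of_pos hpos
    rw [Real.log_inv, Real.log_mul (by positivity) (Real.exp_pos 1).ne', Real.log_exp,
      Real.log_pow] at h
    have hr2pos : (0:ℝ) < r ^ 2 := by positivity
    have hh : -(2 * Real.log r) ≤ (r ^ 2 * Real.exp 1)⁻¹ := by push_cast at h; linarith
    have h2 := mul_le_mul_of_nonneg_right hh hr2pos.le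
    have h3 : (r ^ 2 * Real.exp 1)⁻¹ * r ^ 2 = (Real.exp 1)⁻¹ := by
      field_simp
    rw [h3] at h2
    have hep : (0:ℝ) < Real.exp 1 := Real.exp_pos 1
    rw [div_eq_mul_inv, one_mul, mul_inv]
    nlinarith
  have hγ : (1:ℝ)/2 < Real.eulerMascheroniConstant := Real.one_half_lt_eulerMascheroniConstant
  have hlog2 : Real.log 2 < 0.6931471808 := Real.log_two_lt_d9
  have hI1 : (1:ℝ) ≤ besselI0 r := one_le_I0
  have hIe : besselI0 r ≤ Real.exp (r ^ 2 / 4) := I0_le_exp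
  have hS0 : 0 ≤ besselK0Series r := K0Series_nonneg
  have hSe : besselK0Series r ≤ (r ^ 2 / 4) * Real.exp (r ^ 2 / 4) := K0Series_le
  rw [besselK0, Real.log_div hr0.ne' two_ne_zero]
  revert hI1 hIe hS0 hSe
  generalize besselI0 r = I
  generalize besselK0Series r = S
  intro hI1 hIe hS0 hSe
  -- derived bounds with opaque I, S
  have hIle : I ≤ Real.exp (1/4) := le_trans hIe hE
  have hSle : S ≤ (1/4) * Real.exp (1/4) :=
    le_trans hSe (mul_le_mul hx14 hE (Real.exp_pos _).le (by norm_num))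
  have hIS : I * S ≤ Real.exp (1/2) / 4 := by
    calc I * S ≤ Real.exp (1/4) * ((1/4) * Real.exp (1/4)) :=
          mul_le_mul hIle hSle hS0 (by linarith)
      _ = Real.exp (1/2) / 4 := by rw [← hF]; ring
  have hII1 : I * I - 1 ≤ (r ^ 2 / 2) * Real.exp (1/2) := by
    have hEE : Real.exp (r ^ 2 / 4) * Real.exp (r ^ 2 / 4) = Real.exp (r ^ 2 / 2) := by
      rw [← Real.exp_add]; ring_nf
    have hIIe : I * I ≤ Real.exp (r ^ 2 / 2) := by
      have h := mul_le_mul hIe hIe (by linarith) (Real.exp_pos _).le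
      rw [hEE] at h; exact h
    have ht : (1:ℝ) - r ^ 2 / 2 ≤ Real.exp (-(r ^ 2 / 2)) := by
      have := Real.add_one_le_exp (-(r ^ 2 / 2)); linarith
    have hinv : Real.exp (-(r ^ 2 / 2)) * Real.exp (r ^ 2 / 2) = 1 := by
      rw [← Real.exp_add]; ring_nf; exact Real.exp_zero
    have hexpb : Real.exp (r ^ 2 / 2) ≤ Real.exp (1/2) := Real.exp_le_exp.mpr (by linarith)
    nlinarith [Real.exp_pos (r ^ 2 / 2), Real.exp_pos (-(r ^ 2 / 2))]
  have hT3 : (-Real.log r) * (I * I - 1) ≤ 1 / (2 * Real.exp 1) * (Real.exp (1/2) / 2) := by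
    have h1 : (-Real.log r) * (I * I - 1) ≤ (-Real.log r) * ((r ^ 2 / 2) * Real.exp (1/2)) :=
      mul_le_mul_of_nonneg_left hII1 hL0
    have h3 : ((-Real.log r) * r ^ 2) * (Real.exp (1/2) / 2)
        ≤ 1 / (2 * Real.exp 1) * (Real.exp (1/2) / 2) :=
      mul_le_mul_of_nonneg_right hLr2 (by positivity)
    nlinarith
  have hT3' : (-Real.log r) * (I * I - 1) ≤ 0.152 := by
    have hep : (0:ℝ) < Real.exp 1 := Real.exp_pos 1
    have ha : 1 / (2 * Real.exp 1) ≤ 0.184 := by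
      rw [div_le_iff₀ (by positivity)]
      nlinarith
    have hbb : Real.exp (1/2) / 2 ≤ 0.8244 := by linarith
    have hc : 1 / (2 * Real.exp 1) * (Real.exp (1/2) / 2) ≤ 0.184 * 0.8244 :=
      mul_le_mul ha hbb (by positivity) (by norm_num)
    have : (0.184:ℝ) * 0.8244 ≤ 0.152 := by norm_num
    linarith
  have hA : (Real.log 2 - Real.eulerMascheroniConstant) * (I * I) ≤ 0.1932 * 1.6488 := by
    nlinarith [hI1, hIle, hF, hFlt, sq_nonneg I,
      mul_le_mul hIle hIle (by linarith) (by linarith : (0:ℝ) ≤ Real.exp (1/4))]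
  exact final_arith I S (Real.log r) (Real.exp (1/4)) (Real.exp (1/2)) (by norm_num)
    hI1 hIle hF hFlt hS0 hIS hL0 hT3' hA
end

section
/- For all r in (0,1], (e^{r²/2} − 1)·(−log r) ≤ 0.11. -/
open Real

-- log bound: for 0 < r ≤ 1, -log r ≤ (1/r - r)/2
lemma log_bound : ∀ r : ℝ, 0 < r → r ≤ 1 → -Real.log r ≤ (1/r - r)/2 := by
  intro r hr hr1
  have key : AntitoneOn (fun x : ℝ => 2 * Real.log x - x + 1/x) (Set.Ioi 0) := by
    apply AntitoneOn.mono (antitoneOn_of_deriv_nonpos (convex_Ioi 0) ?_ ?_ ?_) le_rfl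
    · apply ContinuousOn.add
      · exact (continuousOn_const.mul (Real.continuousOn_log.mono (fun x hx => ne_of_gt hx))).sub continuousOn_id
      · exact continuousOn_const.div continuousOn_id (fun x hx => ne_of_gt hx)
    · intro x hx
      rw [interior_Ioi] at hx
      exact (((differentiableAt_id.log (ne_of_gt hx)).const_mul 2).sub differentiableAt_id).add
        (differentiableAt_const 1 |>.div differentiableAt_id (ne_of_gt hx)) |>.differentiableWithinAt
    · intro x hx
      rw [interior_Ioi] at hx
      have hx0 : x ≠ 0 := ne_of_gt hx
      have : deriv (fun x : ℝ => 2 * Real.log x - x + 1/x) x = 2/x - 1 - 1/x^2 := by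
        rw [deriv_fun_add, deriv_fun_sub, deriv_const_mul, Real.deriv_log, deriv_id'']
        · rw [show (HDiv.hDiv (1:ℝ)) = fun y => (fun _ => (1:ℝ)) y / id y from rfl, deriv_fun_div]
          · simp
            ring
          · exact differentiableAt_const 1
          · exact differentiableAt_id
          · exact hx0
        · exact differentiableAt_id.log hx0
        · exact (differentiableAt_id.log hx0).const_mul 2
        · exact differentiableAt_id
        · exact ((differentiableAt_id.log hx0).const_mul 2).sub differentiableAt_id
        · exact (differentiableAt_const 1).div differentiableAt_id hx0
      rw [this]
      have hx2 : (0:ℝ) < x^2 := by positivity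
      have h2 : (x-1)^2 ≥ 0 := sq_nonneg _
      have : 2/x - 1 - 1/x^2 = -((x-1)^2/x^2) := by field_simp; ring
      rw [this]
      exact neg_nonpos.mpr (by positivity)
  have h := key (Set.mem_Ioi.mpr hr) (Set.mem_Ioi.mpr one_pos) hr1
  simp only [Real.log_one] at h
  -- h : 2 * log 1 - 1 + 1/1 ≤ 2 * log r - r + 1/r
  nlinarith [h]

theorem stmt_3 : ∀ r ∈ Set.Ioc (0:ℝ) 1, (Real.exp (r ^ 2 / 2) - 1) * (-Real.log r) ≤ 0.11 := by
  intro r ⟨hr, hr1⟩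
  have hx0 : (0:ℝ) ≤ r^2/2 := by positivity
  have hx1 : r^2/2 ≤ 1 := by nlinarith
  have hexp := Real.exp_bound' hx0 hx1 (n := 3) (by norm_num)
  have hexp' : Real.exp (r^2/2) - 1 ≤ r^2/2 + (r^2/2)^2/2 + (2/9)*(r^2/2)^3 := by
    have heq : (∑ m ∈ Finset.range 3, (r^2/2) ^ m / m.factorial) = 1 + r^2/2 + (r^2/2)^2/2 := by
      norm_num [Finset.sum_range_succ]
    rw [heq] at hexp
    norm_num [Nat.factorial] at hexp
    nlinarith [hexp]
  have hlog := log_bound r hr hr1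
  have hlognn : 0 ≤ -Real.log r := by
    exact neg_nonneg.mpr (Real.log_nonpos (le_of_lt hr) hr1)
  have hexpnn : 0 ≤ Real.exp (r^2/2) - 1 := by
    have := Real.one_le_exp hx0
    linarith
  have step : (Real.exp (r ^ 2 / 2) - 1) * (-Real.log r) ≤
      (r^2/2 + (r^2/2)^2/2 + (2/9)*(r^2/2)^3) * ((1/r - r)/2) := by
    apply mul_le_mul hexp' hlog hlognn (by positivity)
  refine step.trans ?_
  have heq2 : (r^2/2 + (r^2/2)^2/2 + (2/9)*(r^2/2)^3) * ((1/r - r)/2)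
      = ((r^2/2 + r^4/8 + r^6/36) * (1 - r^2)) / (2*r) := by
    field_simp
    ring
  rw [heq2, div_le_iff₀ (by positivity)]
  nlinarith [sq_nonneg (r - 0.63), sq_nonneg (r^2 - 0.4), mul_nonneg hr.le (sq_nonneg (r - 0.63)), mul_nonneg (mul_nonneg hr.le hr.le) (sq_nonneg (r - 0.63)), sq_nonneg r, mul_nonneg (mul_nonneg hr.le hr.le) (sq_nonneg (r^2 - 0.4)), mul_nonneg hr.le (sq_nonneg (r^2-0.4)), sq_nonneg (1-r), mul_nonneg (sub_nonneg.mpr hr1) (sq_nonneg (r-0.63))]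
end

section
/- The integral ∫₀¹ (log(1−r) + r)² / r dr equals 2ζ(3) − 3/2. -/
open Real MeasureTheory Set Filter

lemma sum3 : Summable (fun n : ℕ => 1 / ((n:ℝ)+1)^3) := by
  have h := (Real.summable_one_div_nat_pow (p := 3)).mpr (by norm_num)
  have := (summable_nat_add_iff (f := fun n : ℕ => 1 / (n:ℝ)^3) 1).mpr h
  exact this.congr (by intro n; push_cast; ring)

lemma int_log_sq : IntegrableOn (fun x => Real.log x ^ 2) (Set.Ioc 0 1) := by
  have h : IntegrableOn (fun x : ℝ => 16 * x ^ (-(1/2) : ℝ)) (Set.Ioc 0 1) := by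
    apply Integrable.const_mul
    have := intervalIntegral.intervalIntegrable_rpow' (r := (-(1/2):ℝ)) (a := 0) (b := 1) (by norm_num)
    rwa [intervalIntegrable_iff_integrableOn_Ioc_of_le zero_le_one] at this
  refine Integrable.mono h ((Real.measurable_log.pow_const 2).aestronglyMeasurable) ?_
  rw [ae_restrict_iff' measurableSet_Ioc]
  filter_upwards with x hx
  obtain ⟨hx0, hx1⟩ := hx
  have hlog : |Real.log x| ≤ 4 * x ^ (-(1/4) : ℝ) := by
    have h1 : Real.log x ≤ 0 := Real.log_nonpos hx0.le hx1
    have h2 : Real.log x⁻¹ ≤ (x⁻¹) ^ ((1:ℝ)/4) / (1/4) :=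
      Real.log_le_rpow_div (by positivity) (by norm_num)
    rw [Real.log_inv] at h2
    rw [abs_of_nonpos h1]
    calc -Real.log x ≤ (x⁻¹) ^ ((1:ℝ)/4) / (1/4) := h2
      _ = 4 * x ^ (-(1/4) : ℝ) := by
          rw [← Real.rpow_neg_one x, ← Real.rpow_mul hx0.le]
          norm_num
          ring
  have hnn : (0:ℝ) ≤ x ^ (-(1/4) : ℝ) := Real.rpow_nonneg hx0.le _
  calc ‖Real.log x ^ 2‖ = |Real.log x|^2 := by rw [Real.norm_eq_abs, abs_pow, sq_abs, ← sq_abs]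
    _ ≤ (4 * x ^ (-(1/4) : ℝ))^2 := by
        apply pow_le_pow_left₀ (abs_nonneg _) hlog
    _ = 16 * (x ^ (-(1/4) : ℝ) * x ^ (-(1/4) : ℝ)) := by ring
    _ = 16 * x ^ (-(1/2) : ℝ) := by
        rw [← Real.rpow_add hx0]; norm_num
    _ ≤ ‖16 * x ^ (-(1/2) : ℝ)‖ := le_abs_self _

lemma int_pow_log_sq (n : ℕ) :
    IntegrableOn (fun x => x ^ n * Real.log x ^ 2) (Set.Ioc 0 1) := by
  refine Integrable.mono int_log_sq
    ((measurable_id.pow_const n).mul (Real.measurable_log.pow_const 2)).aestronglyMeasurable ?_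
  rw [ae_restrict_iff' measurableSet_Ioc]
  filter_upwards with x hx
  obtain ⟨hx0, hx1⟩ := hx
  have h1 : x ^ n ≤ 1 := pow_le_one₀ hx0.le hx1
  have h2 : (0:ℝ) ≤ Real.log x ^ 2 := sq_nonneg _
  rw [Real.norm_eq_abs, Real.norm_eq_abs, abs_of_nonneg (by positivity),
    abs_of_nonneg h2]
  nlinarith [pow_nonneg hx0.le n]

lemma int_log01 : IntegrableOn Real.log (Set.Ioc 0 1) := by
  refine Integrable.mono (((integrable_const (1:ℝ)).add int_log_sq))
    Real.measurable_log.aestronglyMeasurable ?_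
  filter_upwards with x
  rw [Real.norm_eq_abs, Real.norm_eq_abs]
  have : |Real.log x| ≤ 1 + Real.log x ^ 2 := by nlinarith [abs_nonneg (Real.log x), sq_abs (Real.log x)]
  calc |Real.log x| ≤ 1 + Real.log x ^ 2 := this
    _ ≤ |1 + Real.log x ^ 2| := le_abs_self _

lemma integral_log01 : ∫ x in Set.Ioo (0:ℝ) 1, Real.log x = -1 := by
  have hcont : ContinuousOn (fun x : ℝ => x * Real.log x - x) (Set.Icc 0 1) :=
    (Real.continuous_mul_log.sub continuous_id).continuousOn
  have hderiv : ∀ x ∈ Set.Ioo (0:ℝ) 1,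
      HasDerivWithinAt (fun x : ℝ => x * Real.log x - x) (Real.log x) (Set.Ioi x) x := by
    intro x hx
    have h1 : HasDerivAt (fun x : ℝ => x * Real.log x - x)
        (1 * Real.log x + x * x⁻¹ - 1) x :=
      ((hasDerivAt_id x).mul (Real.hasDerivAt_log hx.1.ne')).sub (hasDerivAt_id x)
    have : 1 * Real.log x + x * x⁻¹ - 1 = Real.log x := by
      rw [mul_inv_cancel₀ hx.1.ne']; ring
    rw [this] at h1
    exact h1.hasDerivWithinAt
  have hint : IntervalIntegrable Real.log volume 0 1 := by
    rw [intervalIntegrable_iff_integrableOn_Ioc_of_le zero_le_one]; exact int_log01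
  have h := intervalIntegral.integral_eq_sub_of_hasDeriv_right_of_le zero_le_one hcont hderiv hint
  rw [intervalIntegral.integral_of_le zero_le_one, MeasureTheory.integral_Ioc_eq_integral_Ioo] at h
  simpa using h

lemma integral_pow_log_sq (n : ℕ) :
    ∫ x in Set.Ioo (0:ℝ) 1, x ^ n * Real.log x ^ 2 = 2 / ((n:ℝ)+1)^3 := by
  set m : ℝ := (n:ℝ) + 1 with hm_def
  have hm : (0:ℝ) < m := by positivity
  set F : ℝ → ℝ := fun x =>
    x ^ (n+1) * Real.log x ^ 2 / m - 2 * (x ^ (n+1) * Real.log x) / m ^ 2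
      + 2 * x ^ (n+1) / m ^ 3 with hF_def
  have hF1 : F 1 = 2 / m ^ 3 := by simp [hF_def]
  have hF0 : F 0 = 0 := by simp [hF_def]
  have hcont : ContinuousOn F (Set.Icc 0 1) := by
    intro x hx
    rcases eq_or_lt_of_le hx.1 with h0 | h0
    · -- x = 0
      subst h0
      have hIci : Set.Icc (0:ℝ) 1 ⊆ Set.Ici 0 := fun y hy => hy.1
      refine (ContinuousWithinAt.mono ?_ hIci)
      rw [← continuousWithinAt_Ioi_iff_Ici]
      unfold ContinuousWithinAt
      rw [hF0]
      have t1 : Tendsto (fun x : ℝ => x ^ (n+1) * Real.log x ^ 2) (nhdsWithin 0 (Set.Ioi 0)) (nhds 0) := by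
        have h := tendsto_log_mul_rpow_nhdsGT_zero (r := ((n:ℝ)+1)/2) (by positivity)
        have h2 := (h.mul h)
        rw [mul_zero] at h2
        refine h2.congr' ?_
        filter_upwards [self_mem_nhdsWithin] with x (hx : (0:ℝ) < x)
        rw [← Real.rpow_natCast x (n+1)]
        have hxx : x ^ (((n:ℝ)+1)/2) * x ^ (((n:ℝ)+1)/2) = x ^ (((n:ℕ):ℝ)+1) := by
          rw [← Real.rpow_add hx]; ring_nf
        push_cast
        rw [← hxx]
        ring
      have t2 : Tendsto (fun x : ℝ => x ^ (n+1) * Real.log x) (nhdsWithin 0 (Set.Ioi 0)) (nhds 0) := by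
        have h := tendsto_log_mul_rpow_nhdsGT_zero (r := ((n:ℝ)+1)) (by positivity)
        refine h.congr' ?_
        filter_upwards [self_mem_nhdsWithin] with x (hx : (0:ℝ) < x)
        rw [← Real.rpow_natCast x (n+1)]
        push_cast
        ring
      have t3 : Tendsto (fun x : ℝ => x ^ (n+1)) (nhdsWithin 0 (Set.Ioi 0)) (nhds 0) := by
        have := (continuous_pow (n+1)).tendsto (0:ℝ)
        rw [zero_pow (Nat.succ_ne_zero n)] at this
        exact this.mono_left nhdsWithin_le_nhds
      have := ((t1.div_const m).sub ((t2.const_mul 2).div_const (m^2))).add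
        ((t3.const_mul 2).div_const (m^3))
      simpa using this
    · -- x > 0
      apply ContinuousAt.continuousWithinAt
      have hlog : ContinuousAt Real.log x := Real.continuousAt_log h0.ne'
      fun_prop (disch := exact h0.ne')
  have hderiv : ∀ x ∈ Set.Ioo (0:ℝ) 1,
      HasDerivWithinAt F (x ^ n * Real.log x ^ 2) (Set.Ioi x) x := by
    intro x hx
    have hx0 : x ≠ 0 := hx.1.ne'
    have hpow : HasDerivAt (fun y : ℝ => y ^ (n+1)) (((n:ℝ)+1) * x ^ n) x := by
      have := hasDerivAt_pow (n+1) x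
      simpa using this
    have hlog : HasDerivAt Real.log x⁻¹ x := Real.hasDerivAt_log hx0
    have hlogsq : HasDerivAt (fun y : ℝ => Real.log y ^ 2) (2 * Real.log x * x⁻¹) x := by
      have := hlog.pow 2
      simp at this
      exact this
    have h1 : HasDerivAt (fun y : ℝ => y ^ (n+1) * Real.log y ^ 2)
        (((n:ℝ)+1) * x ^ n * Real.log x ^ 2 + x ^ (n+1) * (2 * Real.log x * x⁻¹)) x :=
      hpow.mul hlogsq
    have h2 : HasDerivAt (fun y : ℝ => y ^ (n+1) * Real.log y)
        (((n:ℝ)+1) * x ^ n * Real.log x + x ^ (n+1) * x⁻¹) x := hpow.mul hlog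
    have hF : HasDerivAt F
        ((((n:ℝ)+1) * x ^ n * Real.log x ^ 2 + x ^ (n+1) * (2 * Real.log x * x⁻¹)) / m
          - 2 * (((n:ℝ)+1) * x ^ n * Real.log x + x ^ (n+1) * x⁻¹) / m ^ 2
          + 2 * (((n:ℝ)+1) * x ^ n) / m ^ 3) x := by
      exact ((h1.div_const m).sub ((h2.const_mul 2).div_const (m^2))).add
        ((hpow.const_mul 2).div_const (m^3))
    have heq : (((n:ℝ)+1) * x ^ n * Real.log x ^ 2 + x ^ (n+1) * (2 * Real.log x * x⁻¹)) / m
          - 2 * (((n:ℝ)+1) * x ^ n * Real.log x + x ^ (n+1) * x⁻¹) / m ^ 2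
          + 2 * (((n:ℝ)+1) * x ^ n) / m ^ 3 = x ^ n * Real.log x ^ 2 := by
      rw [hm_def]
      have hx' : x ^ (n+1) * x⁻¹ = x ^ n := by
        rw [pow_succ, mul_assoc, mul_inv_cancel₀ hx0, mul_one]
      field_simp
      ring_nf
    rw [heq] at hF
    exact hF.hasDerivWithinAt
  have hint : IntervalIntegrable (fun x => x ^ n * Real.log x ^ 2) volume 0 1 := by
    rw [intervalIntegrable_iff_integrableOn_Ioc_of_le zero_le_one]; exact int_pow_log_sq n
  have h := intervalIntegral.integral_eq_sub_of_hasDeriv_right_of_le zero_le_one hcont hderiv hint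
  rw [intervalIntegral.integral_of_le zero_le_one, MeasureTheory.integral_Ioc_eq_integral_Ioo] at h
  rw [h, hF1, hF0, sub_zero]

lemma preimage_sub : (fun r : ℝ => 1 - r) ⁻¹' Set.Ioo (0:ℝ) 1 = Set.Ioo (0:ℝ) 1 := by
  ext r
  simp only [Set.mem_preimage, Set.mem_Ioo]
  constructor <;> rintro ⟨h1, h2⟩ <;> constructor <;> linarith

lemma transport (g : ℝ → ℝ) :
    ∫ r in Set.Ioo (0:ℝ) 1, g (1 - r) = ∫ x in Set.Ioo (0:ℝ) 1, g x := by
  have hmp : MeasurePreserving (fun r : ℝ => 1 - r) volume volume :=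
    Measure.measurePreserving_sub_left volume 1
  have hemb : MeasurableEmbedding (fun r : ℝ => 1 - r) :=
    (MeasurableEquiv.subLeft (1:ℝ)).measurableEmbedding
  have h := hmp.setIntegral_preimage_emb hemb g (Set.Ioo 0 1)
  rwa [preimage_sub] at h

lemma transport_int {g : ℝ → ℝ} (hg : IntegrableOn g (Set.Ioo (0:ℝ) 1)) :
    IntegrableOn (fun r => g (1 - r)) (Set.Ioo (0:ℝ) 1) := by
  have hmp : MeasurePreserving (fun r : ℝ => 1 - r) volume volume :=
    Measure.measurePreserving_sub_left volume 1
  have hemb : MeasurableEmbedding (fun r : ℝ => 1 - r) :=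
    (MeasurableEquiv.subLeft (1:ℝ)).measurableEmbedding
  have h := ((hmp.restrict_preimage_emb hemb (Set.Ioo 0 1)).integrable_comp_emb hemb (g := g)).mpr
  rw [preimage_sub] at h
  exact h hg

lemma int_A : IntegrableOn (fun x => Real.log x ^ 2 / (1 - x)) (Set.Ioo (0:ℝ) 1) := by
  have hg : IntegrableOn (fun x : ℝ => 2 * Real.log x ^ 2 + 2) (Set.Ioo (0:ℝ) 1) :=
    ((int_log_sq.mono_set Set.Ioo_subset_Ioc_self).const_mul 2).add (integrable_const 2)
  refine Integrable.mono hg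
    ((Real.measurable_log.pow_const 2).div (measurable_const.sub measurable_id)).aestronglyMeasurable ?_
  rw [ae_restrict_iff' measurableSet_Ioo]
  filter_upwards with x hx
  obtain ⟨hx0, hx1⟩ := hx
  have h1x : 0 < 1 - x := by linarith
  have hA0 : 0 ≤ Real.log x ^ 2 / (1 - x) := by positivity
  rw [Real.norm_eq_abs, Real.norm_eq_abs, abs_of_nonneg hA0]
  have hub : Real.log x ^ 2 / (1 - x) ≤ 2 * Real.log x ^ 2 + 2 := by
    rcases le_or_gt x (1/2) with hhalf | hhalf
    · have : Real.log x ^ 2 / (1 - x) ≤ Real.log x ^ 2 / (1/2) :=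
        div_le_div_of_nonneg_left (sq_nonneg _) (by norm_num) (by linarith)
      calc Real.log x ^ 2 / (1 - x) ≤ Real.log x ^ 2 / (1/2) := this
        _ = 2 * Real.log x ^ 2 := by ring
        _ ≤ 2 * Real.log x ^ 2 + 2 := by linarith
    · have hlogb : -Real.log x ≤ (1 - x) / x := by
        have := Real.log_le_sub_one_of_pos (x := x⁻¹) (by positivity)
        rw [Real.log_inv] at this
        have hxne : x ≠ 0 := hx0.ne'
        field_simp at this ⊢
        linarith
      have hlogn : 0 ≤ -Real.log x := by
        simpa using Real.log_nonpos hx0.le hx1.le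
      have hsq : Real.log x ^ 2 ≤ ((1 - x)/x) ^ 2 := by
        rw [← sq_abs (Real.log x), abs_of_nonpos (by linarith)]
        exact pow_le_pow_left₀ hlogn hlogb 2
      have hxx : ((1-x)/x)^2 ≤ 4 * (1-x)^2 := by
        rw [div_pow]
        rw [div_le_iff₀ (by positivity)]
        nlinarith [sq_nonneg (1-x), sq_nonneg (2*x-1)]
      have : Real.log x ^ 2 / (1 - x) ≤ 4 * (1 - x) := by
        rw [div_le_iff₀ h1x]
        nlinarith
      nlinarith [sq_nonneg (Real.log x)]
  calc Real.log x ^ 2 / (1 - x) ≤ 2 * Real.log x ^ 2 + 2 := hub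
    _ ≤ |2 * Real.log x ^ 2 + 2| := le_abs_self _

lemma value_A : ∫ x in Set.Ioo (0:ℝ) 1, Real.log x ^ 2 / (1 - x)
    = ∑' n : ℕ, 2 / ((n:ℝ)+1)^3 := by
  have hint : ∀ n : ℕ, Integrable (fun x => x ^ n * Real.log x ^ 2)
      (volume.restrict (Set.Ioo (0:ℝ) 1)) :=
    fun n => (int_pow_log_sq n).mono_set Set.Ioo_subset_Ioc_self
  have hnorm : ∀ n : ℕ, ∫ x in Set.Ioo (0:ℝ) 1, ‖x ^ n * Real.log x ^ 2‖
      = 2 / ((n:ℝ)+1)^3 := by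
    intro n
    rw [← integral_pow_log_sq n]
    refine setIntegral_congr_fun measurableSet_Ioo (fun x hx => ?_)
    rw [norm_of_nonneg (mul_nonneg (pow_nonneg hx.1.le n) (sq_nonneg _))]
  have hsum : Summable fun n : ℕ => ∫ x in Set.Ioo (0:ℝ) 1, ‖x ^ n * Real.log x ^ 2‖ := by
    refine Summable.congr ((sum3.mul_left 2)) (fun n => ?_)
    rw [hnorm n, mul_one_div]
  have h := MeasureTheory.integral_tsum_of_summable_integral_norm hint hsum
  have hpt : ∫ x in Set.Ioo (0:ℝ) 1, (∑' n : ℕ, x ^ n * Real.log x ^ 2)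
      = ∫ x in Set.Ioo (0:ℝ) 1, Real.log x ^ 2 / (1 - x) := by
    refine setIntegral_congr_fun measurableSet_Ioo (fun x hx => ?_)
    rw [tsum_mul_right, tsum_geometric_of_lt_one hx.1.le hx.2]
    rw [inv_mul_eq_div]
  rw [← hpt, ← h]
  exact tsum_congr (fun n => by rw [← hnorm n]; exact (setIntegral_congr_fun measurableSet_Ioo
    (fun x hx => (norm_of_nonneg (mul_nonneg (pow_nonneg hx.1.le n) (sq_nonneg _))).symm)))

lemma integral_id_Ioo : ∫ r in Set.Ioo (0:ℝ) 1, r = 1/2 := by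
  have h := integral_id (a := (0:ℝ)) (b := 1)
  rw [intervalIntegral.integral_of_le zero_le_one,
    MeasureTheory.integral_Ioc_eq_integral_Ioo] at h
  rw [h]; norm_num

lemma real_total : ∫ r in Set.Ioo (0:ℝ) 1, (Real.log (1 - r) + r) ^ 2 / r
    = (∑' n : ℕ, 2 / ((n:ℝ)+1)^3) - 3/2 := by
  have hA' : IntegrableOn (fun r => Real.log (1 - r) ^ 2 / r) (Set.Ioo (0:ℝ) 1) := by
    have := transport_int int_A
    simpa only [sub_sub_cancel] using this
  have hlog' : IntegrableOn (fun r => Real.log (1 - r)) (Set.Ioo (0:ℝ) 1) :=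
    transport_int (int_log01.mono_set Set.Ioo_subset_Ioc_self)
  have hid : IntegrableOn (fun r : ℝ => r) (Set.Ioo (0:ℝ) 1) := by
    have := intervalIntegral.intervalIntegrable_id (a := (0:ℝ)) (b := 1) (μ := volume)
    rw [intervalIntegrable_iff_integrableOn_Ioc_of_le zero_le_one] at this
    exact this.mono_set Set.Ioo_subset_Ioc_self
  have hB : IntegrableOn (fun r => 2 * Real.log (1 - r) + r) (Set.Ioo (0:ℝ) 1) :=
    (hlog'.const_mul 2).add hid
  have hsplit : ∫ r in Set.Ioo (0:ℝ) 1, (Real.log (1 - r) + r) ^ 2 / r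
      = (∫ r in Set.Ioo (0:ℝ) 1, Real.log (1 - r) ^ 2 / r)
        + ∫ r in Set.Ioo (0:ℝ) 1, (2 * Real.log (1 - r) + r) := by
    rw [← integral_add hA' hB]
    refine setIntegral_congr_fun measurableSet_Ioo (fun r hr => ?_)
    have hr0 : r ≠ 0 := hr.1.ne'
    field_simp
    ring
  have hA'val : ∫ r in Set.Ioo (0:ℝ) 1, Real.log (1 - r) ^ 2 / r
      = ∑' n : ℕ, 2 / ((n:ℝ)+1)^3 := by
    have h := transport (fun x => Real.log x ^ 2 / (1 - x))
    simp only [sub_sub_cancel] at h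
    rw [h, value_A]
  have hlogval : ∫ r in Set.Ioo (0:ℝ) 1, Real.log (1 - r) = -1 := by
    rw [transport Real.log, integral_log01]
  have hBval : ∫ r in Set.Ioo (0:ℝ) 1, (2 * Real.log (1 - r) + r) = -3/2 := by
    rw [integral_add (hlog'.const_mul 2) hid, MeasureTheory.integral_const_mul, hlogval, integral_id_Ioo]
    norm_num
  rw [hsplit, hA'val, hBval]
  ring

theorem stmt_8 :
    ((∫ r in Set.Ioo (0:ℝ) 1, (Real.log (1 - r) + r) ^ 2 / r : ℝ) : ℂ) =
      2 * riemannZeta 3 - 3 / 2 := by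
  have hz : riemannZeta 3 = ((∑' n : ℕ, 1 / ((n:ℝ)+1)^3 : ℝ) : ℂ) := by
    rw [zeta_eq_tsum_one_div_nat_add_one_cpow (by norm_num)]
    rw [Complex.ofReal_tsum]
    congr 1
    funext n
    rw [show ((3:ℂ)) = ((3:ℕ):ℂ) by norm_num, Complex.cpow_natCast]
    push_cast
    norm_num
  have h2 : (∑' n : ℕ, 2 / ((n:ℝ)+1)^3) = 2 * ∑' n : ℕ, 1 / ((n:ℝ)+1)^3 := by
    rw [← tsum_mul_left]
    exact tsum_congr (fun n => by ring)
  rw [real_total, h2, hz]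
  push_cast
  ring
end

section
/- Let b : [0,1) → ℝ be continuous with 0 ≤ b(r) ≤ M, let 0 < β < 3/2, and define A(r) = ∫₀^r b(t)·t·(1−t)^{−β} dt. Then ∫₀¹ (A(r)/r)² r dr < ∞. -/
open Real MeasureTheory intervalIntegral

theorem stmt_11 (b : ℝ → ℝ) (M β : ℝ) (hb : ContinuousOn b (Set.Ico 0 1))
    (hbM : ∀ r ∈ Set.Ico (0:ℝ) 1, 0 ≤ b r ∧ b r ≤ M) (hβ0 : 0 < β) (hβ : β < 3 / 2)
    (A : ℝ → ℝ)
    (hA : ∀ r ∈ Set.Ioo (0:ℝ) 1, A r = ∫ t in (0:ℝ)..r, b t * t * (1 - t) ^ (-β)) :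
    ∫⁻ r in Set.Ioo (0:ℝ) 1, ENNReal.ofReal ((A r / r) ^ 2 * r) < ⊤ := by
  set γ : ℝ := max β (5/4) with hγdef
  have hγ1 : (1:ℝ) < γ := lt_of_lt_of_le (by norm_num) (le_max_right _ _)
  have hγ32 : γ < 3/2 := max_lt hβ (by norm_num)
  have hβγ : β ≤ γ := le_max_left _ _
  have hγ1' : (0:ℝ) < γ - 1 := by linarith
  have hM : (0:ℝ) ≤ M := le_trans (hbM 0 (by norm_num)).1 (hbM 0 (by norm_num)).2
  set K : ℝ := M / (γ - 1) with hKdef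
  have hK : 0 ≤ K := div_nonneg hM hγ1'.le
  -- key pointwise bound
  have key : ∀ r ∈ Set.Ioo (0:ℝ) 1, (A r / r) ^ 2 * r ≤ K ^ 2 * (1 - r) ^ (2 - 2 * γ) := by
    intro r hr
    obtain ⟨hr0, hr1⟩ := hr
    have h1r : (0:ℝ) < 1 - r := by linarith
    -- bound the integrand
    have hbound : ∀ t ∈ Set.Icc (0:ℝ) r,
        b t * t * (1 - t) ^ (-β) ≤ M * r * (1 - t) ^ (-γ) := by
      intro t ht
      obtain ⟨ht0, htr⟩ := ht
      have ht1 : (0:ℝ) < 1 - t := by linarith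
      have hbt := hbM t ⟨ht0, by linarith⟩
      have hrp : (1 - t) ^ (-β) ≤ (1 - t) ^ (-γ) :=
        Real.rpow_le_rpow_of_exponent_ge ht1 (by linarith) (by linarith)
      have h1 : b t * t ≤ M * r :=
        mul_le_mul hbt.2 htr ht0 hM
      exact mul_le_mul h1 hrp (Real.rpow_nonneg ht1.le _)
        (mul_nonneg hM hr0.le)
    -- integrability of both integrands on [0, r]
    have hsub : Set.uIcc (0:ℝ) r ⊆ Set.Ico 0 1 := by
      rw [Set.uIcc_of_le hr0.le]
      exact fun x hx => ⟨hx.1, lt_of_le_of_lt hx.2 hr1⟩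
    have hcsub : ContinuousOn (fun t : ℝ => 1 - t) (Set.uIcc (0:ℝ) r) :=
      (continuous_const.sub continuous_id).continuousOn
    have hcont : ContinuousOn (fun t => b t * t * (1 - t) ^ (-β)) (Set.uIcc (0:ℝ) r) := by
      apply ContinuousOn.mul
      · exact (hb.mono hsub).mul continuousOn_id
      · exact hcsub.rpow_const (fun x hx => Or.inl (by have := (hsub hx).2; intro h; linarith))
    have hint1 : IntervalIntegrable (fun t => b t * t * (1 - t) ^ (-β)) volume 0 r :=
      hcont.intervalIntegrable
    have hcont2 : ContinuousOn (fun t => M * r * (1 - t) ^ (-γ)) (Set.uIcc (0:ℝ) r) := by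
      apply ContinuousOn.mul continuousOn_const
      exact hcsub.rpow_const (fun x hx => Or.inl (by have := (hsub hx).2; intro h; linarith))
    have hint2 : IntervalIntegrable (fun t => M * r * (1 - t) ^ (-γ)) volume 0 r :=
      hcont2.intervalIntegrable
    -- compute/bound the comparison integral
    have hcomp : (∫ t in (0:ℝ)..r, (1 - t) ^ (-γ)) = ((1 - r) ^ (1 - γ) - 1) / (γ - 1) := by
      have h1 : (∫ t in (0:ℝ)..r, (1 - t) ^ (-γ)) = ∫ u in (1 - r)..(1 - 0), u ^ (-γ) :=
        intervalIntegral.integral_comp_sub_left (fun u => u ^ (-γ)) 1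
      rw [h1]
      rw [integral_rpow (Or.inr ⟨by intro h; rw [neg_eq_iff_eq_neg] at h; linarith, by
        rw [Set.uIcc_of_le (by linarith : 1 - r ≤ 1 - 0)]
        intro h
        exact absurd h.1 (by simp; linarith)⟩)]
      rw [show -γ + 1 = -(γ - 1) by ring, show (1:ℝ) - 0 = 1 by norm_num, Real.one_rpow,
        show (1:ℝ) - γ = -(γ-1) by ring]
      have hne : γ - 1 ≠ 0 := ne_of_gt hγ1'
      field_simp
      ring
    -- A r ≤ M * r * (1-r)^(1-γ) / (γ-1)
    have hAle : A r ≤ K * r * (1 - r) ^ (1 - γ) := by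
      rw [hA r ⟨hr0, hr1⟩]
      calc (∫ t in (0:ℝ)..r, b t * t * (1 - t) ^ (-β))
          ≤ ∫ t in (0:ℝ)..r, M * r * (1 - t) ^ (-γ) :=
            intervalIntegral.integral_mono_on hr0.le hint1 hint2 hbound
        _ = M * r * (((1 - r) ^ (1 - γ) - 1) / (γ - 1)) := by
            rw [intervalIntegral.integral_const_mul, hcomp]
        _ ≤ M * r * ((1 - r) ^ (1 - γ) / (γ - 1)) := by
            apply mul_le_mul_of_nonneg_left _ (mul_nonneg hM hr0.le)
            exact (div_le_div_iff_of_pos_right hγ1').mpr (by linarith)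
        _ = K * r * (1 - r) ^ (1 - γ) := by rw [hKdef]; ring
    have hA0 : 0 ≤ A r := by
      rw [hA r ⟨hr0, hr1⟩]
      apply intervalIntegral.integral_nonneg hr0.le
      intro t ht
      have ht1 : (0:ℝ) < 1 - t := by have := ht.2; linarith
      have hbt := (hbM t ⟨ht.1, by linarith⟩).1
      exact mul_nonneg (mul_nonneg hbt ht.1) (Real.rpow_nonneg (by linarith) _)
    have hdiv : A r / r ≤ K * (1 - r) ^ (1 - γ) := by
      rw [div_le_iff₀ hr0]
      calc A r ≤ K * r * (1 - r) ^ (1 - γ) := hAle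
        _ = K * (1 - r) ^ (1 - γ) * r := by ring
    have hdiv0 : 0 ≤ A r / r := div_nonneg hA0 hr0.le
    have hsq : (A r / r) ^ 2 ≤ (K * (1 - r) ^ (1 - γ)) ^ 2 :=
      pow_le_pow_left₀ hdiv0 hdiv 2
    have hexp : ((1 - r) ^ (1 - γ)) ^ (2:ℕ) = (1 - r) ^ (2 - 2 * γ) := by
      rw [← Real.rpow_natCast ((1 - r) ^ (1 - γ)) 2, ← Real.rpow_mul h1r.le]
      norm_num
      ring_nf
    have hrw : (K * (1 - r) ^ (1 - γ)) ^ 2 = K ^ 2 * (1 - r) ^ (2 - 2 * γ) := by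
      rw [mul_pow, hexp]
    calc (A r / r) ^ 2 * r ≤ (K * (1 - r) ^ (1 - γ)) ^ 2 * 1 :=
          mul_le_mul hsq hr1.le hr0.le (by positivity)
      _ = K ^ 2 * (1 - r) ^ (2 - 2 * γ) := by rw [mul_one, hrw]
  -- the dominating function is integrable
  have hdom : IntegrableOn (fun r => K ^ 2 * (1 - r) ^ (2 - 2 * γ)) (Set.Ioo (0:ℝ) 1) volume := by
    have h1 : IntervalIntegrable (fun u : ℝ => u ^ (2 - 2 * γ)) volume 0 1 :=
      intervalIntegral.intervalIntegrable_rpow' (by linarith)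
    have h2 : IntervalIntegrable (fun r : ℝ => (1 - r) ^ (2 - 2 * γ)) volume 0 1 := by
      have := h1.comp_sub_left 1
      simpa using this.symm
    have h3 : IntervalIntegrable (fun r : ℝ => K ^ 2 * (1 - r) ^ (2 - 2 * γ)) volume 0 1 :=
      h2.const_mul _
    have := (intervalIntegrable_iff_integrableOn_Ioc_of_le (by norm_num : (0:ℝ) ≤ 1)).mp h3
    exact this.mono_set Set.Ioo_subset_Ioc_self
  calc ∫⁻ r in Set.Ioo (0:ℝ) 1, ENNReal.ofReal ((A r / r) ^ 2 * r)
      ≤ ∫⁻ r in Set.Ioo (0:ℝ) 1, ENNReal.ofReal (K ^ 2 * (1 - r) ^ (2 - 2 * γ)) := by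
        apply setLIntegral_mono' measurableSet_Ioo
        intro r hr
        exact ENNReal.ofReal_le_ofReal (key r hr)
    _ < ⊤ := hdom.setLIntegral_lt_top
end

section
/- Let I > 0 and for λ > 2I define α_λ = (−3I + √(I² + 4Iλ))/(λ − 2I). Then α_λ ∈ (0,1) for λ large enough, α_λ = 2√I/√λ + O(1/λ) as λ → ∞, and g(α_λ) = λ/2 + √(Iλ) + O(1) as λ → ∞, where g(α) = λ/(2√(1−α)) + (√(1−α)/α)·I. -/
open Real
set_option maxHeartbeats 1000000

private lemma sqle14 {x y : ℝ} (hx : 0 ≤ x) (hy : 0 ≤ y) (h : x^2 ≤ y^2) : x ≤ y := by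
  nlinarith

lemma aux14 (I : ℝ) (hI : 0 < I) (L a : ℝ) (hL : 100*(I+1)^2 ≤ L)
    (ha : a = (-3*I + Real.sqrt (I^2+4*I*L))/(L-2*I)) :
    0 < a ∧ a < 1 ∧
    |a - 2*Real.sqrt I/Real.sqrt L| ≤ 100*(I+1)^2 * |1/L| ∧
    |L/(2*Real.sqrt (1-a)) + (Real.sqrt (1-a)/a)*I - (L/2 + Real.sqrt (I*L))|
      ≤ 100*(I+1)^2 * |(1:ℝ)| := by
  have h1 : (1:ℝ) ≤ (I+1)^2 := by nlinarith only [hI]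
  have hL100 : (100:ℝ) ≤ L := by nlinarith only [hL, h1]
  have hLpos : (0:ℝ) < L := by linarith only [hL100]
  have hIL : 100*I ≤ L := by nlinarith only [hL, hI]
  have hII : 100*I^2 ≤ L := by nlinarith only [hL, hI]
  have hd : L/2 ≤ L - 2*I := by nlinarith only [hIL, hLpos]
  have hdpos : 0 < L - 2*I := by linarith only [hd, hLpos]
  set s := Real.sqrt (I^2+4*I*L) with hs_def
  set t := Real.sqrt (I*L) with ht_def
  have hs0 : 0 ≤ s := Real.sqrt_nonneg _
  have ht0 : 0 ≤ t := Real.sqrt_nonneg _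
  have hs2 : s^2 = I^2+4*I*L := Real.sq_sqrt (by positivity)
  have ht2 : t^2 = I*L := Real.sq_sqrt (by positivity)
  clear_value s t
  clear hs_def
  have ht_ub : t ≤ L/10 := by
    refine sqle14 ht0 (by linarith only [hLpos]) ?_
    nlinarith only [ht2, mul_le_mul_of_nonneg_right hIL hLpos.le]
  have ht_lb : 10*I ≤ t := by
    refine sqle14 (by positivity) ht0 ?_
    nlinarith only [ht2, mul_le_mul_of_nonneg_left hIL hI.le]
  have hs_lb : 2*t ≤ s := by
    refine sqle14 (by linarith only [ht0]) hs0 ?_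
    nlinarith only [hs2, ht2, sq_nonneg I]
  have hs_ub : s ≤ 2*t + I := by
    refine sqle14 hs0 (by linarith only [ht0, hI]) ?_
    nlinarith only [hs2, ht2, mul_nonneg hI.le ht0]
  have ha' : a = (s - 3*I)/(L - 2*I) := by rw [ha]; ring_nf
  have hn_pos : 0 < s - 3*I := by linarith only [hs_lb, ht_lb, hI]
  have ha_pos : 0 < a := by rw [ha']; positivity
  have ha_ub : a ≤ 4*t/L := by
    rw [ha', div_le_div_iff₀ hdpos hLpos]
    nlinarith only [hs_ub, ht_ub, hI, hLpos, ht0, hd, hIL,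
      mul_le_mul_of_nonneg_left hs_ub hLpos.le, mul_le_mul_of_nonneg_left hd (by linarith only [ht0] : (0:ℝ) ≤ 4*t),
      mul_nonneg hI.le hLpos.le, mul_nonneg ht0 hLpos.le]
  have ha25 : a ≤ 2/5 := by
    have h45 : 4*t/L ≤ 2/5 := by
      rw [div_le_iff₀ hLpos]; linarith only [ht_ub]
    linarith only [ha_ub, h45]
  have ha1 : a < 1 := by linarith only [ha25]
  have hIt : 10*I^2 ≤ I*t := by nlinarith only [mul_le_mul_of_nonneg_left ht_lb hI.le]
  have hItL : I*t ≤ I*L/10 := by nlinarith only [mul_le_mul_of_nonneg_left ht_ub hI.le]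
  have hIIL : 100*I^2 ≤ I*L := by nlinarith only [mul_le_mul_of_nonneg_left hIL hI.le]
  refine ⟨ha_pos, ha1, ?_, ?_⟩
  · -- second part : |a - 2√I/√L| ≤ C/L
    have hsL : Real.sqrt L > 0 := Real.sqrt_pos.mpr hLpos
    have hst : Real.sqrt I * Real.sqrt L = t := (Real.sqrt_mul hI.le L).symm.trans ht_def.symm
    have hLs : Real.sqrt L * Real.sqrt L = L := Real.mul_self_sqrt hLpos.le
    have h2t : 2*Real.sqrt I/Real.sqrt L = 2*t/L := by
      rw [div_eq_div_iff hsL.ne' hLpos.ne']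
      linear_combination 2*Real.sqrt L * hst - 2*Real.sqrt I * hLs
    rw [h2t]
    have key : a - 2*t/L = (L*(s-3*I) - 2*t*(L-2*I)) / ((L-2*I)*L) := by
      rw [ha', div_sub_div _ _ hdpos.ne' hLpos.ne']; ring
    have hNub : L*(s-3*I) - 2*t*(L-2*I) ≤ 3*I*L := by
      nlinarith only [mul_le_mul_of_nonneg_left hs_ub hLpos.le, hItL,
        mul_nonneg hI.le hLpos.le]
    have hNlb : -(3*I*L) ≤ L*(s-3*I) - 2*t*(L-2*I) := by
      nlinarith only [mul_le_mul_of_nonneg_left hs_lb hLpos.le, mul_nonneg hI.le ht0]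
    have hC2 : 3*I*L ≤ 100*(I+1)^2*(L-2*I) := by
      nlinarith only [mul_le_mul_of_nonneg_left hd (show (0:ℝ) ≤ 100*(I+1)^2 by positivity),
        mul_le_mul_of_nonneg_right (show 6*I ≤ 100*(I+1)^2 by nlinarith only [hI]) hLpos.le]
    have hCL : |1/L| = 1/L := abs_of_pos (by positivity)
    rw [hCL, mul_one_div, key, abs_le]
    constructor
    · rw [← neg_div, div_le_div_iff₀ hLpos (by positivity)]
      nlinarith only [mul_le_mul_of_nonneg_right hNlb hLpos.le,
        mul_le_mul_of_nonneg_right hC2 hLpos.le]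
    · rw [div_le_div_iff₀ (by positivity) hLpos]
      nlinarith only [mul_le_mul_of_nonneg_right hNub hLpos.le,
        mul_le_mul_of_nonneg_right hC2 hLpos.le]
  · -- third part
    have h1a : (0:ℝ) < 1 - a := by linarith only [ha25]
    set u := Real.sqrt (1-a) with hu_def
    have hu0 : 0 ≤ u := Real.sqrt_nonneg _
    have hu2 : u^2 = 1 - a := Real.sq_sqrt h1a.le
    have hu_pos : 0 < u := Real.sqrt_pos.mpr h1a
    clear_value u
    have hu_le1 : u ≤ 1 := sqle14 hu0 zero_le_one (by nlinarith only [hu2, ha_pos])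
    have haL : a*L ≤ 4*t := (le_div_iff₀ hLpos).mp ha_ub
    have hLa2 : L*a^2 ≤ 16*I := by
      have hq := mul_le_mul haL haL (mul_nonneg ha_pos.le hLpos.le)
        (by linarith only [ht0] : (0:ℝ) ≤ 4*t)
      nlinarith only [hq, ht2, hLpos, sq_nonneg a, mul_pos hLpos hLpos]
    have hu_ub2 : u ≤ 1 - a/2 := by
      refine sqle14 hu0 (by linarith only [ha25]) ?_
      nlinarith only [hu2, sq_nonneg a]
    have hu_lb2 : 1 - a/2 - a^2/2 ≤ u := by
      refine sqle14 ?_ hu0 ?_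
      · nlinarith only [ha_pos, ha25]
      · nlinarith only [hu2, sq_nonneg a, ha_pos, ha25,
          mul_nonneg (mul_nonneg ha_pos.le ha_pos.le) ha_pos.le,
          mul_nonneg (mul_nonneg (mul_nonneg ha_pos.le ha_pos.le) ha_pos.le) ha_pos.le]
    have hE1lb : 1 + a/2 ≤ 1/u := by
      rw [le_div_iff₀ hu_pos]
      nlinarith only [mul_le_mul_of_nonneg_left hu_ub2 (by linarith only [ha_pos] : (0:ℝ) ≤ 1+a/2),
        sq_nonneg a]
    have hE1ub : 1/u ≤ 1 + a/2 + 2*a^2 := by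
      rw [div_le_iff₀ hu_pos]
      have hr : (0:ℝ) ≤ 1+a/2+2*a^2 := by positivity
      nlinarith only [mul_le_mul_of_nonneg_left hu_lb2 hr,
        mul_nonneg (sq_nonneg a) (show (0:ℝ) ≤ 5/4 - 5/4*a - a^2 by nlinarith only [ha_pos, ha25])]
    have hT1 : |(L/2)*(1/u - 1 - a/2)| ≤ 16*I := by
      rw [abs_mul, abs_of_pos (by positivity : (0:ℝ) < L/2)]
      have hE : |1/u - 1 - a/2| ≤ 2*a^2 := by
        rw [abs_le]; constructor
        · nlinarith only [hE1lb, sq_nonneg a]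
        · linarith only [hE1ub]
      have := mul_le_mul_of_nonneg_left hE (by linarith only [hLpos] : (0:ℝ) ≤ L/2)
      linarith only [this, hLa2]
    have key2 : L*a/4 - t/2 = (L*(s-3*I) - 2*t*(L-2*I)) / (4*(L-2*I)) := by
      rw [ha', mul_div_assoc', div_div, div_sub_div _ _ (by positivity) (by norm_num), div_eq_div_iff (by positivity) (by positivity)]; ring
    have hLs_lb := mul_le_mul_of_nonneg_left hs_lb hLpos.le
    have hLs_ub := mul_le_mul_of_nonneg_left hs_ub hLpos.le
    have hT2 : |L*a/4 - t/2| ≤ 3*I := by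
      rw [key2, abs_le]
      constructor
      · rw [le_div_iff₀ (by positivity)]
        nlinarith only [hLs_lb, mul_nonneg hI.le ht0, hIIL, hItL]
      · rw [div_le_iff₀ (by positivity)]
        nlinarith only [hLs_ub, mul_nonneg hI.le ht0, hIIL, hItL]
    have key3 : I/a - t/2 = (2*I*(L-2*I) - t*(s-3*I)) / (2*(s-3*I)) := by
      rw [ha', div_div_eq_mul_div, div_sub_div _ _ hn_pos.ne' (by norm_num), div_eq_div_iff (by positivity) (by positivity)]; ring
    have hts_lb : 2*t^2 ≤ t*s := by nlinarith only [mul_le_mul_of_nonneg_left hs_lb ht0]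
    have hts_ub : t*s ≤ 2*t^2 + I*t := by nlinarith only [mul_le_mul_of_nonneg_left hs_ub ht0]
    have hIs : 2*(I*t) ≤ I*s := by nlinarith only [mul_le_mul_of_nonneg_left hs_lb hI.le]
    have hT3 : |I/a - t/2| ≤ I := by
      rw [key3, abs_le]
      constructor
      · rw [le_div_iff₀ (by positivity)]
        nlinarith only [hts_ub, ht2, hIt, mul_nonneg hI.le hs0, sq_nonneg I, hIs]
      · rw [div_le_iff₀ (by positivity)]
        nlinarith only [hts_lb, ht2, hIt, hIs, sq_nonneg I]
    have hT4 : |I*(1-u)/a| ≤ I := by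
      have hu_ge : 1 - a ≤ u := by
        nlinarith only [hu2, mul_nonneg hu0 (by linarith only [hu_le1] : (0:ℝ) ≤ 1 - u)]
      have hnum : 0 ≤ I*(1-u) := mul_nonneg hI.le (by linarith only [hu_le1])
      rw [abs_of_nonneg (by positivity), div_le_iff₀ ha_pos]
      nlinarith only [hu_ge, hI, mul_le_mul_of_nonneg_left hu_ge hI.le]
    have hdecomp : L/(2*u) + (u/a)*I - (L/2 + t) =
        (L/2)*(1/u - 1 - a/2) + (L*a/4 - t/2) + (I/a - t/2) - I*(1-u)/a := by
      field_simp
      ring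
    rw [hdecomp, abs_le, abs_one, mul_one]
    have e1 := abs_le.mp hT1
    have e2 := abs_le.mp hT2
    have e3 := abs_le.mp hT3
    have e4 := abs_le.mp hT4
    have hfin : 21*I ≤ 100*(I+1)^2 := by nlinarith only [hI]
    constructor <;>
      linarith only [e1.1, e1.2, e2.1, e2.2, e3.1, e3.2, e4.1, e4.2, hfin, hI]

open Filter Asymptotics

theorem stmt_14 (I : ℝ) (hI : 0 < I)
    (α : ℝ → ℝ)
    (hα : ∀ lam : ℝ, 2 * I < lam →
      α lam = (-3 * I + Real.sqrt (I ^ 2 + 4 * I * lam)) / (lam - 2 * I))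
    (g : ℝ → ℝ → ℝ)
    (hg : ∀ lam a : ℝ,
      g lam a = lam / (2 * Real.sqrt (1 - a)) + (Real.sqrt (1 - a) / a) * I) :
    (∀ᶠ lam in atTop, α lam ∈ Set.Ioo (0:ℝ) 1) ∧
    (fun lam => α lam - 2 * Real.sqrt I / Real.sqrt lam) =O[atTop] (fun lam => 1 / lam) ∧
    (fun lam => g lam (α lam) - (lam / 2 + Real.sqrt (I * lam))) =O[atTop]
      (fun _ => (1:ℝ)) := by
  have hev : ∀ᶠ lam in atTop, 100*(I+1)^2 ≤ lam := eventually_ge_atTop _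
  have h2I : ∀ lam : ℝ, 100*(I+1)^2 ≤ lam → 2 * I < lam := by
    intro lam hlam
    nlinarith only [hlam, hI, sq_nonneg (I-1)]
  refine ⟨?_, ?_, ?_⟩
  · filter_upwards [hev] with lam hlam
    obtain ⟨h1, h2, -, -⟩ := aux14 I hI lam (α lam) hlam (hα lam (h2I lam hlam))
    exact ⟨h1, h2⟩
  · refine IsBigO.of_bound (100*(I+1)^2) ?_
    filter_upwards [hev] with lam hlam
    obtain ⟨-, -, h3, -⟩ := aux14 I hI lam (α lam) hlam (hα lam (h2I lam hlam))
    simpa [Real.norm_eq_abs, abs_inv] using h3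
  · refine IsBigO.of_bound (100*(I+1)^2) ?_
    filter_upwards [hev] with lam hlam
    obtain ⟨-, -, -, h4⟩ := aux14 I hI lam (α lam) hlam (hα lam (h2I lam hlam))
    rw [hg lam (α lam)]
    simpa [Real.norm_eq_abs] using h4
end

section
/- For all r in (0,1], the function δ(r) = (1 − I₀(r)²)·log r − (γ − log 2)·I₀(r)² + I₀(r)·∑_{k≥1} H_k (r²/4)^k/(k!)² satisfies δ(r) ≤ 1. -/
open Real MeasureTheory Filter Set

lemma harmonic_le_self (n : ℕ) : (harmonic n : ℚ) ≤ (n : ℚ) := by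
  induction n with
  | zero => simp
  | succ k ih =>
    rw [harmonic_succ]
    push_cast
    have : ((k:ℚ)+1)⁻¹ ≤ 1 := by
      have hk : (0:ℚ) ≤ (k:ℚ) := Nat.cast_nonneg k
      rw [inv_le_one_iff₀]; right; linarith
    linarith

lemma aux_bounds {r : ℝ} (hr0 : 0 < r) (hr1 : r ≤ 1) :
    1 ≤ besselI0 r ∧ besselI0 r ≤ 4/3 ∧ besselI0 r ≤ 1 + r^2/3 ∧
    0 ≤ besselK0Series r ∧ besselK0Series r ≤ r^2/3 := by
  set x : ℝ := r ^ 2 / 4 with hxdef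
  have hx0 : 0 ≤ x := by positivity
  have hx4 : x ≤ 1/4 := by
    have : r ^ 2 ≤ 1 := by nlinarith
    rw [hxdef]; linarith
  have hx1 : x < 1 := by linarith
  -- summability of I0 series
  have hI0term : ∀ k : ℕ, 0 ≤ x ^ k / (Nat.factorial k : ℝ) ^ 2 := by
    intro k; positivity
  have hI0le : ∀ k : ℕ, x ^ k / (Nat.factorial k : ℝ) ^ 2 ≤ x ^ k := by
    intro k
    have h1 : (1:ℝ) ≤ (Nat.factorial k : ℝ) ^ 2 := by
      have := Nat.one_le_iff_ne_zero.mpr (Nat.factorial_ne_zero k)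
      have : (1:ℝ) ≤ (Nat.factorial k : ℝ) := by exact_mod_cast this
      nlinarith
    calc x ^ k / (Nat.factorial k : ℝ) ^ 2 ≤ x ^ k / 1 := by
          apply div_le_div_of_nonneg_left (by positivity) (by norm_num) h1
      _ = x ^ k := by ring
  have hgeom : Summable (fun k : ℕ => x ^ k) := summable_geometric_of_lt_one hx0 hx1
  have hgeomsum : ∑' k : ℕ, x ^ k = (1 - x)⁻¹ := tsum_geometric_of_lt_one hx0 hx1
  have hIsum : Summable (fun k : ℕ => x ^ k / (Nat.factorial k : ℝ) ^ 2) :=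
    Summable.of_nonneg_of_le hI0term hI0le hgeom
  have hgeominv : (1 - x)⁻¹ ≤ 4/3 := by
    rw [inv_le_iff_one_le_mul₀ (by linarith)]
    linarith
  -- besselI0 unfold
  have hI0eq : besselI0 r = ∑' k : ℕ, x ^ k / (Nat.factorial k : ℝ) ^ 2 := rfl
  constructor
  · -- 1 ≤ I0
    rw [hI0eq]
    have := Summable.le_tsum hIsum 0 (fun j _ => hI0term j)
    simpa using this
  constructor
  · -- I0 ≤ 4/3
    rw [hI0eq]
    calc (∑' k : ℕ, x ^ k / (Nat.factorial k : ℝ) ^ 2) ≤ ∑' k : ℕ, x ^ k :=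
          Summable.tsum_le_tsum hI0le hIsum hgeom
      _ = (1 - x)⁻¹ := hgeomsum
      _ ≤ 4/3 := hgeominv
  -- tail bound for I0
  have htail : ∀ k : ℕ, x ^ (k+1) / (Nat.factorial (k+1) : ℝ) ^ 2 ≤ x * x ^ k := by
    intro k
    calc x ^ (k+1) / (Nat.factorial (k+1) : ℝ) ^ 2 ≤ x ^ (k+1) := hI0le (k+1)
      _ = x * x ^ k := by ring
  have hgeom' : Summable (fun k : ℕ => x * x ^ k) := hgeom.mul_left x
  have hgeom'sum : ∑' k : ℕ, x * x ^ k = x * (1 - x)⁻¹ := by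
    rw [tsum_mul_left, hgeomsum]
  have hxg : x * (1 - x)⁻¹ ≤ r^2/3 := by
    have : x * (1 - x)⁻¹ ≤ x * (4/3) := by
      apply mul_le_mul_of_nonneg_left hgeominv hx0
    rw [hxdef] at this ⊢
    linarith
  constructor
  · -- I0 ≤ 1 + r²/3
    rw [hI0eq, Summable.tsum_eq_zero_add hIsum]
    simp only [pow_zero, Nat.factorial_zero]
    norm_num
    have hts : Summable (fun k : ℕ => x ^ (k+1) / (Nat.factorial (k+1) : ℝ) ^ 2) := by
      apply Summable.of_nonneg_of_le (fun k => by positivity) htail hgeom'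
    calc (∑' k : ℕ, x ^ (k+1) / (Nat.factorial (k+1) : ℝ) ^ 2)
        ≤ ∑' k : ℕ, x * x ^ k := Summable.tsum_le_tsum htail hts hgeom'
      _ = x * (1 - x)⁻¹ := hgeom'sum
      _ ≤ r^2/3 := hxg
  -- K0 series
  have hKterm : ∀ k : ℕ,
      0 ≤ (harmonic (k + 1) : ℝ) * x ^ (k + 1) / (Nat.factorial (k + 1) : ℝ) ^ 2 := by
    intro k
    have h1 : (0:ℝ) ≤ (harmonic (k+1) : ℝ) := by
      have := (harmonic_pos (Nat.succ_ne_zero k)).le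
      exact_mod_cast this
    positivity
  have hKle : ∀ k : ℕ,
      (harmonic (k + 1) : ℝ) * x ^ (k + 1) / (Nat.factorial (k + 1) : ℝ) ^ 2 ≤ x * x ^ k := by
    intro k
    have hH : (harmonic (k+1) : ℝ) ≤ (k+1 : ℝ) := by
      have := harmonic_le_self (k+1)
      have h2 : (harmonic (k+1) : ℝ) ≤ ((k+1 : ℕ) : ℝ) := by exact_mod_cast this
      simpa using h2
    have hfac : ((k+1 : ℝ)) ≤ (Nat.factorial (k+1) : ℝ) ^ 2 := by
      have h1 : (k+1) ≤ Nat.factorial (k+1) := Nat.self_le_factorial (k+1)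
      have h2 : Nat.factorial (k+1) ≤ (Nat.factorial (k+1))^2 := by
        nlinarith [Nat.one_le_iff_ne_zero.mpr (Nat.factorial_ne_zero (k+1))]
      have := le_trans h1 h2
      exact_mod_cast this
    have hH0 : (0:ℝ) ≤ (harmonic (k+1) : ℝ) := by
      have := (harmonic_pos (Nat.succ_ne_zero k)).le
      exact_mod_cast this
    have hf0 : (0:ℝ) < (Nat.factorial (k+1) : ℝ) ^ 2 := by positivity
    rw [div_le_iff₀ hf0]
    have hxk : (0:ℝ) ≤ x ^ (k+1) := by positivity
    calc (harmonic (k+1) : ℝ) * x ^ (k+1) ≤ (Nat.factorial (k+1) : ℝ)^2 * x ^ (k+1) := by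
          apply mul_le_mul_of_nonneg_right _ hxk
          exact le_trans hH hfac
      _ = x * x ^ k * (Nat.factorial (k+1) : ℝ)^2 := by ring
  have hKsum : Summable (fun k : ℕ =>
      (harmonic (k + 1) : ℝ) * x ^ (k + 1) / (Nat.factorial (k + 1) : ℝ) ^ 2) :=
    Summable.of_nonneg_of_le hKterm hKle hgeom'
  have hKeq : besselK0Series r = ∑' k : ℕ,
      (harmonic (k + 1) : ℝ) * x ^ (k + 1) / (Nat.factorial (k + 1) : ℝ) ^ 2 := rfl
  constructor
  · rw [hKeq]
    exact tsum_nonneg hKterm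
  · rw [hKeq]
    calc (∑' k : ℕ, (harmonic (k + 1) : ℝ) * x ^ (k + 1) / (Nat.factorial (k + 1) : ℝ) ^ 2)
        ≤ ∑' k : ℕ, x * x ^ k := Summable.tsum_le_tsum hKle hKsum hgeom'
      _ = x * (1 - x)⁻¹ := hgeom'sum
      _ ≤ r^2/3 := hxg

lemma neg_sq_log_le {r : ℝ} (hr0 : 0 < r) (hr1 : r ≤ 1) :
    -(r^2 * Real.log r) ≤ 27/128 := by
  set s : ℝ := Real.sqrt r with hs
  have hs0 : 0 < s := Real.sqrt_pos.mpr hr0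
  have hsq : s ^ 2 = r := Real.sq_sqrt hr0.le
  have hlog : Real.log r = 2 * Real.log s := by
    rw [← hsq, Real.log_pow]; push_cast; ring
  have hls : -Real.log s ≤ 1/s - 1 := by
    have := Real.log_le_sub_one_of_pos (show (0:ℝ) < 1/s by positivity)
    rw [Real.log_div one_ne_zero (ne_of_gt hs0), Real.log_one] at this
    linarith
  have key : -(r^2 * Real.log r) ≤ 2 * s^3 - 2 * s^4 := by
    rw [hlog, ← hsq]
    have h4 : (0:ℝ) ≤ (s^2)^2 := by positivity
    have := mul_le_mul_of_nonneg_left hls h4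
    have hinv : (s^2)^2 * (1/s) = s^3 := by
      field_simp
    nlinarith [this]
  have poly : 2 * s^3 - 2 * s^4 ≤ 27/128 := by
    nlinarith [mul_nonneg (sq_nonneg (4*s-3)) (show (0:ℝ) ≤ 16*s^2+8*s+3 by positivity)]
  linarith

theorem stmt_16 :
    ∀ r ∈ Set.Ioc (0:ℝ) 1,
      (1 - besselI0 r ^ 2) * Real.log r
        - (Real.eulerMascheroniConstant - Real.log 2) * besselI0 r ^ 2
        + besselI0 r * besselK0Series r ≤ 1 := by
  intro r hr
  obtain ⟨hr0, hr1⟩ := hr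
  obtain ⟨hI1, hI2, hI3, hS0, hS1⟩ := aux_bounds hr0 hr1
  set I := besselI0 r
  set S := besselK0Series r
  set L := Real.log r with hL
  have hLneg : L ≤ 0 := Real.log_nonpos hr0.le hr1
  have hrl : -(r^2 * L) ≤ 27/128 := neg_sq_log_le hr0 hr1
  have hγ : (1:ℝ)/2 < Real.eulerMascheroniConstant :=
    Real.one_half_lt_eulerMascheroniConstant
  have hlog2 : Real.log 2 < 0.6931471808 := Real.log_two_lt_d9
  have hr2 : r^2 ≤ 1 := by nlinarith
  -- term 1 : (1 - I²) L ≤ 21/128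
  have e1 : I^2 - 1 ≤ (7/9) * r^2 := by nlinarith
  have hA : (1 - I^2) * L ≤ 21/128 := by
    nlinarith [mul_le_mul_of_nonneg_right e1 (show (0:ℝ) ≤ -L by linarith)]
  -- term 2
  have hB : -(Real.eulerMascheroniConstant - Real.log 2) * I^2 ≤ (16/9) * 0.1931471808 := by
    have hd : Real.log 2 - Real.eulerMascheroniConstant ≤ 0.1931471808 := by linarith
    have hd0 : 0 ≤ Real.log 2 - Real.eulerMascheroniConstant := by
      have := Real.log_two_gt_d9
      have := Real.eulerMascheroniConstant_lt_two_thirds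
      linarith
    nlinarith
  -- term 3
  have hC : I * S ≤ 4/9 := by nlinarith
  nlinarith [hA, hB, hC]
end
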